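/- For the process ∅ →^{k₁} A →^{k₂} ∅ with generating function G(s,t) = (1 + (s−1)e^{−k₂t}) exp((k₁/k₂)(s−1)(1−e^{−k₂t})), the probabilities p_n(t) converge as t → ∞ to the Poisson distribution p_n = (1/n!)(k₁/k₂)^n exp(−k₁/k₂). -/

import Mathlib

lemma key_iter (a m : ℝ) : ∀ n : ℕ,
    iteratedDeriv n (fun s => (1 + (s - 1) * a) * Real.exp (m * (s - 1))) =
    fun s => ((1 + (s - 1) * a) * m ^ n + (n : ℝ) * a * m ^ (n - 1)) *
      Real.exp (m * (s - 1)) := by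
  intro n
  induction n with
  | zero => simp [iteratedDeriv_zero]
  | succ k ih =>
    rw [iteratedDeriv_succ, ih]
    funext s
    have h1 : HasDerivAt (fun s : ℝ => (1 + (s - 1) * a) * m ^ k +
        (k : ℝ) * a * m ^ (k - 1)) (a * m ^ k) s := by
      have h := (((hasDerivAt_id s).sub_const 1).mul_const a).const_add 1
      simpa using (h.mul_const (m ^ k)).add_const ((k : ℝ) * a * m ^ (k - 1))
    have h2 : HasDerivAt (fun s : ℝ => Real.exp (m * (s - 1)))
        (Real.exp (m * (s - 1)) * m) s := by
      have h : HasDerivAt (fun s : ℝ => m * (s - 1)) m s := by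
        simpa using ((hasDerivAt_id s).sub_const 1).const_mul m
      simpa using h.exp
    rw [deriv_fun_mul h1.differentiableAt h2.differentiableAt, h1.deriv, h2.deriv]
    rcases k with _ | j
    · simp; ring
    · simp only [Nat.add_sub_cancel, Nat.cast_add, Nat.cast_one]
      ring

theorem stationary_limit_is_poisson (k₁ k₂ : ℝ) (hk₁ : 0 < k₁) (hk₂ : 0 < k₂)
    (G : ℝ → ℝ → ℝ)
    (hG : ∀ s t, G s t = (1 + (s - 1) * Real.exp (-k₂ * t)) *
      Real.exp ((k₁ / k₂) * (s - 1) * (1 - Real.exp (-k₂ * t))))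
    (p : ℕ → ℝ → ℝ)
    -- p n t is the coefficient of s^n in the expansion of G(s,t) in s
    (hp : ∀ n t, p n t = iteratedDeriv n (fun s => G s t) 0 / n.factorial) :
    ∀ n : ℕ, Filter.Tendsto (fun t => p n t) Filter.atTop
      (nhds ((1 / n.factorial) * (k₁ / k₂) ^ n * Real.exp (-(k₁ / k₂)))) := by
  intro n
  set c : ℝ := k₁ / k₂ with hc
  set F : ℝ → ℝ := fun a =>
    ((1 + (0 - 1) * a) * (c * (1 - a)) ^ n + (n : ℝ) * a * (c * (1 - a)) ^ (n - 1)) *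
      Real.exp ((c * (1 - a)) * (0 - 1)) / n.factorial with hF
  have hpF : ∀ t, p n t = F (Real.exp (-k₂ * t)) := by
    intro t
    rw [hp]
    have hfun : (fun s => G s t) = fun s =>
        (1 + (s - 1) * Real.exp (-k₂ * t)) *
          Real.exp ((c * (1 - Real.exp (-k₂ * t))) * (s - 1)) := by
      funext s
      rw [hG]
      ring_nf
    rw [hfun, key_iter]
  have hFcont : Continuous F := by
    apply Continuous.div_const
    fun_prop
  have htend : Filter.Tendsto (fun t => Real.exp (-k₂ * t)) Filter.atTop (nhds 0) := by
    apply Real.tendsto_exp_atBot.comp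
    apply Filter.Tendsto.const_mul_atTop_of_neg (by linarith : -k₂ < 0) Filter.tendsto_id
  have hF0 : F 0 = (1 / n.factorial) * c ^ n * Real.exp (-c) := by
    simp only [hF]
    norm_num
    ring
  have := (hFcont.continuousAt.tendsto.comp htend)
  rw [hF0] at this
  simpa [hpF, Function.comp_def] using this
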